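/- Let T be a tree on a finite vertex type V (a connected acyclic simple graph), let x ≠ y be vertices with x and y not adjacent in T, and let G be the simple graph obtained from T by adding the edge {x, y} (so G.Adj a b iff T.Adj a b or {a, b} = {x, y}). Then for all distinct vertices u and v that are not adjacent in G: u and v are biconnected in G if and only if there exists a path from x to y in T whose support contains both u and v. (This is the fundamental-cycle fact: the unique new biconnected component of T plus a non-tree edge consists exactly of the tree path between the edge's endpoints.) -/

import Mathlib

/-- Vertices `u` and `v` are biconnected in `G`: they are distinct, connected by a walk,
and remain connected after removal of any vertex other than `u` and `v`. -/
def Biconnected {V : Type*} (G : SimpleGraph V) (u v : V) : Prop :=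
  u ≠ v ∧ Nonempty (G.Walk u v) ∧
    ∀ w : V, w ∉ ({u, v} : Set V) → ∃ p : G.Walk u v, w ∉ p.support

open SimpleGraph Walk

section Aux

variable {V : Type*} {T G : SimpleGraph V}

private lemma tree_path_unique (hT : T.IsTree) {a b : V} {p q : T.Walk a b}
    (hp : p.IsPath) (hq : q.IsPath) : p = q :=
  (hT.existsUnique_path a b).unique hp hq

private lemma getVert_one_append {a b c : V} (p : T.Walk a b) (q : T.Walk b c)
    (h : 1 ≤ p.length) : (p.append q).getVert 1 = p.getVert 1 := by
  rw [Walk.getVert_append]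
  by_cases h1 : 1 < p.length
  · rw [if_pos h1]
  · have hl : p.length = 1 := le_antisymm (not_lt.mp h1) h
    rw [if_neg h1, hl, Nat.sub_self, Walk.getVert_zero]
    exact (p.getVert_of_length_le hl.le).symm

/-- length of a walk with distinct endpoints is at least 1 -/
private lemma one_le_length_of_ne {a b : V} {p : T.Walk a b} (h : a ≠ b) :
    1 ≤ p.length := by
  rcases Nat.eq_zero_or_pos p.length with h0 | h0
  · exact absurd (Walk.eq_of_length_eq_zero h0) h
  · exact h0

private lemma adj_mem_path_iff (hT : T.IsTree) {u z w : V} (huw : T.Adj u w)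
    {p : T.Walk u z} (hp : p.IsPath) [DecidableEq V] :
    w ∈ p.support ↔ p.getVert 1 = w := by
  constructor
  · intro hmem
    have ht : p.takeUntil w hmem = Walk.cons huw Walk.nil :=
      tree_path_unique hT (hp.takeUntil hmem) (IsPath.nil.cons (by simpa using huw.ne))
    have h1 : (p.takeUntil w hmem).length = 1 := by rw [ht]; rfl
    have hspec := p.take_spec hmem
    calc p.getVert 1
        = ((p.takeUntil w hmem).append (p.dropUntil w hmem)).getVert 1 := by rw [hspec]
      _ = (p.takeUntil w hmem).getVert 1 := getVert_one_append _ _ (by omega)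
      _ = w := by rw [ht]; rfl
  · intro h1
    have hlen : 1 ≤ p.length := by
      rcases Nat.eq_zero_or_pos p.length with h0 | h0
      · exfalso
        have hz : p.getVert 1 = z := p.getVert_of_length_le (by omega)
        have hu : u = z := Walk.eq_of_length_eq_zero h0
        exact huw.ne (by rw [hu, ← hz, h1])
      · exact h0
    exact Walk.mem_support_iff_exists_getVert.mpr ⟨1, h1, hlen⟩

private lemma getVert_one_eq (hT : T.IsTree) {u a b z : V} {p : T.Walk u a} {q : T.Walk u b}
    (hp : p.IsPath) (hq : q.IsPath) (hz : z ∈ p.support) (hz' : z ∈ q.support) (hzu : z ≠ u)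
    [DecidableEq V] : p.getVert 1 = q.getVert 1 := by
  have he : p.takeUntil z hz = q.takeUntil z hz' :=
    tree_path_unique hT (hp.takeUntil hz) (hq.takeUntil hz')
  have hlp : 1 ≤ (p.takeUntil z hz).length :=
    one_le_length_of_ne (fun h => hzu h.symm)
  have hlq : 1 ≤ (q.takeUntil z hz').length :=
    one_le_length_of_ne (fun h => hzu h.symm)
  calc p.getVert 1
      = ((p.takeUntil z hz).append (p.dropUntil z hz)).getVert 1 := by rw [p.take_spec hz]
    _ = (p.takeUntil z hz).getVert 1 := getVert_one_append _ _ hlp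
    _ = (q.takeUntil z hz').getVert 1 := by rw [he]
    _ = ((q.takeUntil z hz').append (q.dropUntil z hz')).getVert 1 :=
        (getVert_one_append _ _ hlq).symm
    _ = q.getVert 1 := by rw [q.take_spec hz']

/-- If `u` is not on the tree path from `x` to `y`, then a neighbour `w` of `u`
is on the tree path from `u` to `x` iff it is on the tree path from `u` to `y`. -/
private lemma mem_iff_mem (hT : T.IsTree) {u x y w : V} (huw : T.Adj u w)
    {p : T.Walk x y} (hp : p.IsPath) (hu : u ∉ p.support)
    {p1 : T.Walk u x} {p2 : T.Walk u y} (hp1 : p1.IsPath) (hp2 : p2.IsPath) :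
    (w ∈ p1.support ↔ w ∈ p2.support) := by
  classical
  have hM : ∃ z, z ≠ u ∧ z ∈ p1.support ∧ z ∈ p2.support := by
    by_contra hM
    push_neg at hM
    have hdis : ∀ z, z ∈ p1.support → z ∈ p2.support → z = u := by
      intro z h1 h2
      by_contra hzu
      exact (hM z hzu h1) h2
    have hu2 : u ∉ p2.support.tail := by
      have := hp2.support_nodup
      rw [p2.support_eq_cons] at this
      exact (List.nodup_cons.mp this).1
    have hpath : (p1.reverse.append p2).IsPath := by
      rw [Walk.isPath_def, Walk.support_append, List.nodup_append]
      refine ⟨by rw [Walk.support_reverse]; exact List.nodup_reverse.mpr hp1.support_nodup,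
        hp2.support_nodup.tail, ?_⟩
      intro z hz1 z' hz2 hzz
      rw [← hzz] at hz2
      have hz1' : z ∈ p1.support := by
        rw [Walk.support_reverse, List.mem_reverse] at hz1; exact hz1
      have hz2' : z ∈ p2.support := List.mem_of_mem_tail hz2
      exact absurd hz2 (by rw [hdis z hz1' hz2']; exact hu2)
    have := tree_path_unique hT hp hpath
    apply hu
    rw [this, Walk.mem_support_append_iff]
    left
    simp [Walk.support_reverse]
  obtain ⟨z, hzu, hz1, hz2⟩ := hM
  rw [adj_mem_path_iff hT huw hp1, adj_mem_path_iff hT huw hp2,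
    getVert_one_eq hT hp1 hp2 hz1 hz2 hzu]

private def liftW (hle : T ≤ G) {a b : V} (r : T.Walk a b) : G.Walk a b :=
  r.transfer G (fun e he => SimpleGraph.edgeSet_mono hle (r.edges_subset_edgeSet he))

private lemma liftW_support (hle : T ≤ G) {a b : V} (r : T.Walk a b) :
    (liftW hle r).support = r.support :=
  Walk.support_transfer _ _

/-- Forward direction core: a vertex biconnected (in `G = T + xy`) to some non-neighbour
lies on the tree path between `x` and `y`. -/
private lemma forward_mem (hT : T.IsTree) {x y : V} (hxy : x ≠ y) (hnadj : ¬T.Adj x y)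
    (hG : ∀ a b : V, G.Adj a b ↔ (T.Adj a b ∨ s(a, b) = s(x, y)))
    {u v : V} (huv : u ≠ v) (hnG : ¬ G.Adj u v)
    {p : T.Walk x y} (hp : p.IsPath) (hbi : Biconnected G u v) :
    u ∈ p.support := by
  classical
  by_contra hu
  -- tree path from u to v
  obtain ⟨q, hq⟩ := (hT.existsUnique_path u v).exists
  have hnTuv : ¬ T.Adj u v := fun h => hnG ((hG u v).mpr (Or.inl h))
  have hq1 : 1 ≤ q.length := one_le_length_of_ne huv
  have hq2 : 2 ≤ q.length := by
    rcases Nat.lt_or_ge q.length 2 with h2 | h2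
    · exfalso
      have heq : q.length = 1 := by omega
      have : T.Adj (q.getVert 0) (q.getVert 1) := q.adj_getVert_succ (by omega)
      rw [q.getVert_zero] at this
      have hv1 : q.getVert 1 = v := by
        rw [← heq]; exact q.getVert_length
      rw [hv1] at this
      exact hnTuv this
    · exact h2
  set w := q.getVert 1 with hw
  have huw : T.Adj u w := by
    have := q.adj_getVert_succ (i := 0) (by omega)
    rwa [q.getVert_zero] at this
  have hwu : w ≠ u := huw.ne'
  have hwv : w ≠ v := fun h => hnTuv (h ▸ huw)
  -- the avoidance predicate
  set A : V → Prop := fun z => ∀ (r : T.Walk u z), r.IsPath → w ∉ r.support with hA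
  have hAu : A u := by
    intro r hr
    have : r = Walk.nil := tree_path_unique hT hr IsPath.nil
    rw [this]
    simpa using hwu
  have hAv : ¬ A v := by
    intro h
    exact h q hq (Walk.mem_support_iff_exists_getVert.mpr ⟨1, rfl, hq1⟩)
  -- step along a T-edge avoiding w
  have hstep : ∀ a b : V, A a → T.Adj a b → b ≠ w → A b := by
    intro a b hAa hab hbw r hr
    obtain ⟨s, hs⟩ := (hT.existsUnique_path u a).exists
    have hws : w ∉ s.support := hAa s hs
    by_cases hba : b ∈ s.support
    · -- then the tree path u→b is a prefix of s
      have : r = s.takeUntil b hba := tree_path_unique hT hr (hs.takeUntil hba)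
      rw [this]
      exact fun hmem => hws (s.support_takeUntil_subset hba hmem)
    · have hpath : (s.append (Walk.cons hab Walk.nil)).IsPath := by
        rw [Walk.isPath_def, Walk.support_append]
        simp only [Walk.support_cons, Walk.support_nil, List.tail_cons]
        rw [List.nodup_append]
        refine ⟨hs.support_nodup, List.nodup_singleton b, ?_⟩
        intro z hz1 z' hz2 hzz
        rw [← hzz] at hz2
        rw [List.mem_singleton] at hz2
        exact absurd (hz2 ▸ hz1) hba
      have : r = s.append (Walk.cons hab Walk.nil) := tree_path_unique hT hr hpath
      rw [this, Walk.mem_support_append_iff]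
      rintro (h | h)
      · exact hws h
      · simp only [Walk.support_cons, Walk.support_nil, List.mem_cons,
          List.mem_singleton, List.not_mem_nil, or_false] at h
        rcases h with h | h
        · exact hws (h ▸ s.end_mem_support)
        · exact hbw h.symm
  -- A x ↔ A y
  obtain ⟨p1, hp1⟩ := (hT.existsUnique_path u x).exists
  obtain ⟨p2, hp2⟩ := (hT.existsUnique_path u y).exists
  have hAx_iff : A x ↔ (w ∉ p1.support) := by
    constructor
    · intro h; exact h p1 hp1
    · intro h r hr
      rwa [tree_path_unique hT hr hp1]
  have hAy_iff : A y ↔ (w ∉ p2.support) := by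
    constructor
    · intro h; exact h p2 hp2
    · intro h r hr
      rwa [tree_path_unique hT hr hp2]
  have hAxy : A x ↔ A y := by
    rw [hAx_iff, hAy_iff, not_iff_not]
    exact mem_iff_mem hT huw hp hu hp1 hp2
  -- induction over any G-walk avoiding w
  have hclaim : ∀ (a c : V) (r : G.Walk a c), w ∉ r.support → A a → A c := by
    intro a c r
    induction r with
    | nil => exact fun _ h => h
    | @cons a b c hab r ih =>
      intro hws hAa
      rw [Walk.support_cons] at hws
      have hws' : w ∉ r.support := fun h => hws (List.mem_cons_of_mem _ h)
      have hbw : b ≠ w := fun h => hws' (h ▸ r.start_mem_support)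
      have hAb : A b := by
        rcases (hG a b).mp hab with h | h
        · exact hstep a b hAa h hbw
        · rw [Sym2.eq_iff] at h
          rcases h with ⟨rfl, rfl⟩ | ⟨rfl, rfl⟩
          · exact hAxy.mp hAa
          · exact hAxy.mpr hAa
      exact ih hws' hAb
  obtain ⟨-, -, h3⟩ := hbi
  obtain ⟨r, hr⟩ := h3 w (by simp [hwu, hwv])
  exact hAv (hclaim u v r hr hAu)
private lemma backward (hT : T.IsTree)
    {x y : V} (hG : ∀ a b : V, G.Adj a b ↔ (T.Adj a b ∨ s(a, b) = s(x, y)))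
    {u v : V} (huv : u ≠ v) [DecidableEq V]
    {p : T.Walk x y} (hp : p.IsPath) (hu : u ∈ p.support)
    (hv : v ∈ (p.dropUntil u hu).support) :
    ∀ w : V, w ∉ ({u, v} : Set V) → ∃ r : G.Walk u v, w ∉ r.support := by
  have hle : T ≤ G := fun {a b} hadj => (hG a b).mpr (Or.inl hadj)
  have hGxy : G.Adj x y := (hG x y).mpr (Or.inr rfl)
  set t := p.takeUntil u hu with ht
  set d := p.dropUntil u hu with hd
  have hdp : d.IsPath := hp.dropUntil hu
  set mid := d.takeUntil v hv with hmid
  set e := d.dropUntil v hv with he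
  intro w hwuv
  have hwu : w ≠ u := fun h => hwuv (by simp [h])
  have hwv : w ≠ v := fun h => hwuv (by simp [h])
  by_cases hwm : w ∈ mid.support
  · -- use the outer route: u →(t.reverse) x →(edge) y →(e.reverse) v
    have hwt : w ∉ t.support := by
      intro hws
      -- w ∈ t.support and w ∈ d.support (via mid ⊆ d): contradiction with nodup unless w = u
      have hpn := hp.support_nodup
      rw [← p.take_spec hu, Walk.support_append, List.nodup_append] at hpn
      have hdisj := hpn.2.2
      have hwd : w ∈ d.support := d.support_takeUntil_subset hv hwm
      rw [d.support_eq_cons, List.mem_cons] at hwd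
      rcases hwd with h | hwd
      · exact hwu h
      · exact hdisj _ hws _ hwd rfl
    have hwe : w ∉ e.support := by
      intro hws
      have hdn := hdp.support_nodup
      rw [← d.take_spec hv, Walk.support_append, List.nodup_append] at hdn
      have hdisj := hdn.2.2
      rw [e.support_eq_cons, List.mem_cons] at hws
      rcases hws with h | hws
      · exact hwv h
      · exact hdisj _ hwm _ hws rfl
    refine ⟨(liftW hle t.reverse).append (Walk.cons hGxy (liftW hle e.reverse)), ?_⟩
    rw [Walk.mem_support_append_iff]
    rintro (h | h)
    · rw [liftW_support, Walk.support_reverse, List.mem_reverse] at h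
      exact hwt h
    · rw [Walk.support_cons, List.mem_cons] at h
      rcases h with h | h
      · exact hwt (by rw [h]; exact t.start_mem_support)
      · rw [liftW_support, Walk.support_reverse, List.mem_reverse] at h
        exact hwe h
  · exact ⟨liftW hle mid, by rwa [liftW_support]⟩

end Aux

theorem stmt_6 {V : Type*} [Fintype V] (T G : SimpleGraph V) (hT : T.IsTree)
    {x y : V} (hxy : x ≠ y) (hnadj : ¬ T.Adj x y)
    (hG : ∀ a b : V, G.Adj a b ↔ (T.Adj a b ∨ s(a, b) = s(x, y))) :
    ∀ u v : V, u ≠ v → ¬ G.Adj u v →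
      (Biconnected G u v ↔
        ∃ p : T.Walk x y, p.IsPath ∧ u ∈ p.support ∧ v ∈ p.support) := by
  classical
  have hle : T ≤ G := fun {a b} hadj => (hG a b).mpr (Or.inl hadj)
  intro u v huv hnG
  constructor
  · intro hbi
    obtain ⟨p, hp⟩ := (hT.existsUnique_path x y).exists
    have hbi' : Biconnected G v u := by
      obtain ⟨h1, h2, h3⟩ := hbi
      refine ⟨h1.symm, ⟨h2.some.reverse⟩, fun w hw => ?_⟩
      obtain ⟨r, hr⟩ := h3 w (by rw [Set.pair_comm u v]; exact hw)
      exact ⟨r.reverse, by rwa [Walk.support_reverse, List.mem_reverse]⟩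
    exact ⟨p, hp, forward_mem hT hxy hnadj hG huv hnG hp hbi,
      forward_mem hT hxy hnadj hG huv.symm (fun h => hnG h.symm) hp hbi'⟩
  · rintro ⟨p, hp, hu, hv⟩
    obtain ⟨q, hq⟩ := (hT.existsUnique_path u v).exists
    refine ⟨huv, ⟨liftW hle q⟩, ?_⟩
    have hsplit : v ∈ (p.takeUntil u hu).support ∨ v ∈ (p.dropUntil u hu).support := by
      have := p.take_spec hu
      rw [← this] at hv
      rwa [Walk.mem_support_append_iff] at hv
    rcases hsplit with hv' | hv'
    · -- v comes before u: use the reversed path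
      have hG' : ∀ a b : V, G.Adj a b ↔ (T.Adj a b ∨ s(a, b) = s(y, x)) := by
        intro a b
        rw [hG a b, Sym2.eq_swap (a := y)]
      have hu2 : u ∈ p.reverse.support := by
        rw [Walk.support_reverse, List.mem_reverse]; exact hu
      have hdeq : p.reverse.dropUntil u hu2 = (p.takeUntil u hu).reverse :=
        tree_path_unique hT (hp.reverse.dropUntil hu2) (hp.takeUntil hu).reverse
      have hv2 : v ∈ (p.reverse.dropUntil u hu2).support := by
        rw [hdeq, Walk.support_reverse, List.mem_reverse]; exact hv'
      exact backward hT hG' huv hp.reverse hu2 hv2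
    · exact backward hT hG huv hp hu hv'
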